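/- For every set S ⊆ {0,1}^s × {0,1}^s, δ > 0, and k, if a₁,…,a_k and b₁,…,b_k are chosen uniformly and independently from {0,1}^s, then with probability at least 1 − 4e^{−δ²k/2} the following holds: |(1/k²)·#{(i,j) : (a_i,b_j) ∈ S} − |S|/2^{2s}| < δ. Consequently, if N_out distinct outcome-triples are tracked and 4e^{−δ²k/2}·N_in·N_out < 1 where N_in is the number of input pairs, there exists a single choice of a₁,…,a_k, b₁,…,b_k such that the sampled probability of every tracked event is within δ of the true probability simultaneously. -/

import Mathlib

open Real Finset

lemma hoeffding_mgf {p t : ℝ} (hp0 : 0 ≤ p) (hp1 : p ≤ 1) (ht : 0 ≤ t) :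
    1 - p + p * Real.exp t ≤ Real.exp (p * t + t^2/8) := by
  set g : ℝ → ℝ := fun u => 1 - p + p * Real.exp u with hg
  have hgpos : ∀ u, 0 < g u := by
    intro u
    rcases eq_or_lt_of_le hp0 with h | h
    · simp [hg, ← h]
    · have := Real.exp_pos u
      have h2 : 0 < p * Real.exp u := by positivity
      show 0 < 1 - p + p * Real.exp u
      nlinarith
  have hgd : ∀ u, HasDerivAt g (p * Real.exp u) u := by
    intro u
    exact ((Real.hasDerivAt_exp u).const_mul p).const_add (1 - p)
  set ψ : ℝ → ℝ := fun u => p + u/4 - p * Real.exp u / g u with hψ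
  -- ψ is monotone
  have hψd : ∀ u, HasDerivAt ψ (1/4 - (p * Real.exp u * g u - p * Real.exp u * (p * Real.exp u)) / (g u)^2) u := by
    intro u
    have h1 : HasDerivAt (fun u => p * Real.exp u / g u)
        ((p * Real.exp u * g u - p * Real.exp u * (p * Real.exp u)) / (g u)^2) u :=
      ((Real.hasDerivAt_exp u).const_mul p).div (hgd u) (hgpos u).ne'
    have h2 : HasDerivAt (fun u => p + u/4) (1/4) u := by
      simpa using ((hasDerivAt_id u).div_const 4).const_add p
    exact h2.sub h1
  have hψmono : Monotone ψ := by
    apply monotone_of_deriv_nonneg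
    · intro u; exact (hψd u).differentiableAt
    · intro u
      rw [(hψd u).deriv]
      have hgu := hgpos u
      have he := Real.exp_pos u
      have key : p * Real.exp u * g u - p * Real.exp u * (p * Real.exp u) ≤ (g u)^2 / 4 := by
        have : p * Real.exp u * g u - p * Real.exp u * (p * Real.exp u)
            = (p * Real.exp u) * (1 - p) := by simp only [hg]; ring
        nlinarith [sq_nonneg (p * Real.exp u - (1 - p))]
      have : (p * Real.exp u * g u - p * Real.exp u * (p * Real.exp u)) / (g u)^2 ≤ 1/4 := by
        rw [div_le_iff₀ (by positivity)]
        nlinarith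
      linarith
  have hψ0 : ψ 0 = 0 := by
    simp [hψ, hg]
  set φ : ℝ → ℝ := fun u => p * u + u^2/8 - Real.log (g u) with hφ
  have hφd : ∀ u, HasDerivAt φ (ψ u) u := by
    intro u
    have h1 : HasDerivAt (fun u => Real.log (g u)) (p * Real.exp u / g u) u :=
      (hgd u).log (hgpos u).ne'
    have h2 : HasDerivAt (fun u : ℝ => p * u) p u := by
      simpa using (hasDerivAt_id u).const_mul p
    have h3 : HasDerivAt (fun u : ℝ => u^2/8) (u/4) u := by
      have := (hasDerivAt_pow 2 u).div_const 8
      simpa using this.congr_deriv (by ring)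
    exact (h2.add h3).sub h1
  have hφmono : MonotoneOn φ (Set.Ici 0) := by
    apply monotoneOn_of_deriv_nonneg (convex_Ici 0)
    · exact Continuous.continuousOn
        (Differentiable.continuous fun u => (hφd u).differentiableAt)
    · intro u hu
      exact ((hφd u).differentiableAt).differentiableWithinAt
    · intro u hu
      rw [(hφd u).deriv]
      rw [interior_Ici] at hu
      have : (0:ℝ) ≤ u := le_of_lt hu
      calc (0:ℝ) = ψ 0 := hψ0.symm
        _ ≤ ψ u := hψmono this
  have hφ0 : φ 0 = 0 := by simp [hφ, hg]
  have : 0 ≤ φ t := by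
    rw [← hφ0]
    exact hφmono (by simp) (by simpa using ht) ht
  have hlog : Real.log (g t) ≤ p * t + t^2/8 := by
    simp only [hφ] at this; linarith
  calc 1 - p + p * Real.exp t = g t := rfl
    _ = Real.exp (Real.log (g t)) := (Real.exp_log (hgpos t)).symm
    _ ≤ Real.exp (p * t + t^2/8) := Real.exp_le_exp.mpr hlog

lemma exp_mul_le_seg {x t : ℝ} (hx0 : 0 ≤ x) (hx1 : x ≤ 1) :
    Real.exp (t * x) ≤ 1 - x + x * Real.exp t := by
  have h := convexOn_exp.2 (Set.mem_univ (0:ℝ)) (Set.mem_univ t)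
    (by linarith : (0:ℝ) ≤ 1 - x) hx0 (by ring)
  simp only [smul_eq_mul, mul_zero, zero_add, Real.exp_zero, mul_one] at h
  calc Real.exp (t * x) = Real.exp (x * t) := by rw [mul_comm]
    _ ≤ (1-x) * 1 + x * Real.exp t := by simpa using h
    _ = 1 - x + x * Real.exp t := by ring

lemma sum_prod_pow {α : Type*} [Fintype α] (k : ℕ) (g : α → ℝ) :
    ∑ v : Fin k → α, ∏ i, g (v i) = (∑ a, g a)^k := by
  have := Finset.prod_univ_sum (fun _ : Fin k => (univ : Finset α)) (fun _ a => g a)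
  simp only [Fintype.piFinset_univ] at this
  rw [← this, Finset.prod_const, Finset.card_univ, Fintype.card_fin]

lemma chernoff_one {α : Type*} [Fintype α] [Nonempty α] (k : ℕ) (hk : 0 < k)
    (f : α → ℝ) (h0 : ∀ a, 0 ≤ f a) (h1 : ∀ a, f a ≤ 1) (ε : ℝ) (hε : 0 < ε) :
    ((Finset.univ.filter fun v : Fin k → α =>
        ε ≤ (∑ i, f (v i)) / k - (∑ a, f a) / Fintype.card α).card : ℝ)
      ≤ Real.exp (-2 * ε^2 * k) * (Fintype.card α : ℝ)^k := by
  set N : ℝ := (Fintype.card α : ℝ) with hN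
  have hNpos : 0 < N := by
    simp only [hN]; exact_mod_cast Fintype.card_pos
  set m : ℝ := (∑ a, f a) / N with hm
  have hm0 : 0 ≤ m := by
    apply div_nonneg _ hNpos.le
    exact Finset.sum_nonneg fun a _ => h0 a
  have hm1 : m ≤ 1 := by
    rw [hm, div_le_one hNpos]
    calc ∑ a, f a ≤ ∑ _a : α, (1:ℝ) := Finset.sum_le_sum fun a _ => h1 a
      _ = N := by simp [hN]
  set t : ℝ := 4 * ε with hT
  have ht : 0 ≤ t := by positivity
  have hkpos : (0:ℝ) < k := by exact_mod_cast hk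
  -- Step 1: indicator ≤ exp
  have step1 : ((Finset.univ.filter fun v : Fin k → α =>
        ε ≤ (∑ i, f (v i)) / k - m).card : ℝ)
      ≤ ∑ v : Fin k → α, Real.exp (t * ((∑ i, f (v i)) - k * (m + ε))) := by
    calc ((Finset.univ.filter fun v : Fin k → α =>
            ε ≤ (∑ i, f (v i)) / k - m).card : ℝ)
        = ∑ _v ∈ (Finset.univ.filter fun v : Fin k → α =>
            ε ≤ (∑ i, f (v i)) / k - m), (1:ℝ) := by simp
      _ ≤ ∑ v ∈ (Finset.univ.filter fun v : Fin k → α =>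
            ε ≤ (∑ i, f (v i)) / k - m),
            Real.exp (t * ((∑ i, f (v i)) - k * (m + ε))) := by
          apply Finset.sum_le_sum
          intro v hv
          rw [Finset.mem_filter] at hv
          have hv' := hv.2
          have hnn : 0 ≤ t * ((∑ i, f (v i)) - k * (m + ε)) := by
            apply mul_nonneg ht
            have h' : (m + ε) * k ≤ ∑ i, f (v i) := by
              rw [← le_div_iff₀ hkpos]; linarith
            nlinarith
          calc (1:ℝ) = Real.exp 0 := by simp
            _ ≤ _ := Real.exp_le_exp.mpr hnn
      _ ≤ ∑ v : Fin k → α, Real.exp (t * ((∑ i, f (v i)) - k * (m + ε))) := by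
          apply Finset.sum_le_sum_of_subset_of_nonneg (Finset.filter_subset _ _)
          intro v _ _; positivity
  -- Step 2: product structure
  have step2 : ∑ v : Fin k → α, Real.exp (t * ((∑ i, f (v i)) - k * (m + ε)))
      = Real.exp (-(t * k * (m + ε))) * (∑ a, Real.exp (t * f a))^k := by
    rw [← sum_prod_pow, Finset.mul_sum]
    apply Finset.sum_congr rfl
    intro v _
    rw [← Real.exp_sum, ← Real.exp_add]
    congr 1
    rw [mul_sub, Finset.mul_sum]
    ring
  -- Step 3: mgf bound
  have step3 : ∑ a, Real.exp (t * f a) ≤ N * Real.exp (t * m + t^2/8) := by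
    calc ∑ a, Real.exp (t * f a) ≤ ∑ a, (1 - f a + f a * Real.exp t) :=
          Finset.sum_le_sum fun a _ => exp_mul_le_seg (h0 a) (h1 a)
      _ = N * (1 - m + m * Real.exp t) := by
          have hsum : ∑ a, f a = N * m := by rw [hm]; field_simp
          have h1 : ∑ _a : α, (1:ℝ) = N := by simp [hN]
          rw [Finset.sum_add_distrib, Finset.sum_sub_distrib, ← Finset.sum_mul, h1, hsum]
          ring
      _ ≤ N * Real.exp (t * m + t^2/8) := by
          have := hoeffding_mgf hm0 hm1 ht
          have h' : 1 - m + m * Real.exp t ≤ Real.exp (t * m + t^2/8) := by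
            rw [mul_comm t m]; exact this
          exact mul_le_mul_of_nonneg_left h' hNpos.le
  -- Combine
  have hnn2 : (0:ℝ) ≤ ∑ a, Real.exp (t * f a) :=
    Finset.sum_nonneg fun a _ => (Real.exp_pos _).le
  calc ((Finset.univ.filter fun v : Fin k → α =>
        ε ≤ (∑ i, f (v i)) / k - m).card : ℝ)
      ≤ Real.exp (-(t * k * (m + ε))) * (∑ a, Real.exp (t * f a))^k := by
        rw [← step2]; exact step1
    _ ≤ Real.exp (-(t * k * (m + ε))) * (N * Real.exp (t * m + t^2/8))^k := by
        apply mul_le_mul_of_nonneg_left _ (Real.exp_pos _).le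
        exact pow_le_pow_left₀ hnn2 step3 k
    _ = Real.exp (-2 * ε^2 * k) * N^k := by
        rw [mul_pow, ← Real.exp_nat_mul]
        have h2 : Real.exp (-(t * k * (m + ε))) * (N^k * Real.exp (k * (t * m + t^2/8)))
            = (Real.exp (-(t * k * (m + ε))) * Real.exp (k * (t * m + t^2/8))) * N^k := by ring
        rw [h2, ← Real.exp_add]
        have h3 : -(t * (k:ℝ) * (m + ε)) + (k:ℝ) * (t * m + t^2/8) = -2 * ε^2 * (k:ℝ) := by
          rw [hT]; ring
        rw [h3]

lemma chernoff_two {α : Type*} [Fintype α] [Nonempty α] (k : ℕ) (hk : 0 < k)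
    (f : α → ℝ) (h0 : ∀ a, 0 ≤ f a) (h1 : ∀ a, f a ≤ 1) (ε : ℝ) (hε : 0 < ε) :
    ((Finset.univ.filter fun v : Fin k → α =>
        ε ≤ |(∑ i, f (v i)) / k - (∑ a, f a) / Fintype.card α|).card : ℝ)
      ≤ 2 * Real.exp (-2 * ε^2 * k) * (Fintype.card α : ℝ)^k := by
  classical
  set N : ℝ := (Fintype.card α : ℝ) with hN
  have hNpos : 0 < N := by simp only [hN]; exact_mod_cast Fintype.card_pos
  have hkpos : (0:ℝ) < k := by exact_mod_cast hk
  set X : (Fin k → α) → ℝ := fun v => (∑ i, f (v i)) / k - (∑ a, f a) / N with hX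
  have hsplit : (Finset.univ.filter fun v : Fin k → α => ε ≤ |X v|)
      ⊆ (Finset.univ.filter fun v : Fin k → α => ε ≤ X v)
        ∪ (Finset.univ.filter fun v : Fin k → α => ε ≤ -(X v)) := by
    intro v hv
    rw [Finset.mem_filter] at hv
    rw [Finset.mem_union, Finset.mem_filter, Finset.mem_filter]
    rcases le_abs.mp hv.2 with h | h
    · exact Or.inl ⟨hv.1, h⟩
    · exact Or.inr ⟨hv.1, h⟩
  have hbound1 := chernoff_one k hk f h0 h1 ε hε
  set f' : α → ℝ := fun a => 1 - f a with hf'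
  have hbound2' := chernoff_one k hk f' (fun a => by simp [hf']; exact h1 a)
    (fun a => by simp [hf']; exact h0 a) ε hε
  have heq : (Finset.univ.filter fun v : Fin k → α => ε ≤ -(X v))
      = (Finset.univ.filter fun v : Fin k → α =>
          ε ≤ (∑ i, f' (v i)) / k - (∑ a, f' a) / Fintype.card α) := by
    apply Finset.filter_congr
    intro v _
    have h1' : ∑ i, f' (v i) = k - ∑ i, f (v i) := by
      simp [hf', Finset.sum_sub_distrib]
    have h2' : ∑ a, f' a = N - ∑ a, f a := by
      simp [hf', Finset.sum_sub_distrib, hN]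
    rw [h1', h2', ← hN]
    constructor <;> intro h <;> [skip; skip] <;>
      · have : (↑k - ∑ i, f (v i)) / ↑k - (N - ∑ a, f a) / N = -(X v) := by
          simp only [hX]; field_simp; ring
        first
          | (rw [this]; exact h)
          | (rw [this] at h; exact h)
  have hcard : ((Finset.univ.filter fun v : Fin k → α => ε ≤ |X v|).card : ℝ)
      ≤ ((Finset.univ.filter fun v : Fin k → α => ε ≤ X v).card : ℝ)
        + ((Finset.univ.filter fun v : Fin k → α => ε ≤ -(X v)).card : ℝ) := by
    have := (Finset.card_le_card hsplit).trans (Finset.card_union_le _ _)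
    exact_mod_cast this
  rw [heq] at hcard
  calc ((Finset.univ.filter fun v : Fin k → α => ε ≤ |X v|).card : ℝ)
      ≤ _ + _ := hcard
    _ ≤ Real.exp (-2 * ε^2 * k) * N^k + Real.exp (-2 * ε^2 * k) * N^k :=
        add_le_add hbound1 hbound2'
    _ = 2 * Real.exp (-2 * ε^2 * k) * N^k := by ring

lemma card_filter_prod {β γ : Type*} [Fintype β] [Fintype γ] (P : β × γ → Prop) [DecidablePred P] :
    (Finset.univ.filter P).card = ∑ a : β, (Finset.univ.filter fun b => P (a, b)).card := by
  simp only [Finset.card_filter]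
  rw [Fintype.sum_prod_type]

lemma card_filter_prod' {β γ : Type*} [Fintype β] [Fintype γ] (P : β × γ → Prop) [DecidablePred P] :
    (Finset.univ.filter P).card = ∑ b : γ, (Finset.univ.filter fun a => P (a, b)).card := by
  simp only [Finset.card_filter]
  rw [Fintype.sum_prod_type]
  exact Finset.sum_comm

lemma newman_core {α : Type*} [Fintype α] [DecidableEq α] [Nonempty α] (k : ℕ) (hk : 0 < k)
    (δ : ℝ) (hδ : 0 < δ) (S : Finset (α × α)) :
    ((Finset.univ.filter fun ab : (Fin k → α) × (Fin k → α) =>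
        ¬ (|((Finset.univ.filter fun ij : Fin k × Fin k =>
            (ab.1 ij.1, ab.2 ij.2) ∈ S).card : ℝ) / (k:ℝ)^2
          - (S.card : ℝ) / ((Fintype.card α : ℝ))^2| < δ)).card : ℝ)
      ≤ 4 * Real.exp (-δ^2 * (k:ℝ) / 2) * (Fintype.card α : ℝ)^(2*k) := by
  classical
  set N : ℝ := (Fintype.card α : ℝ) with hN
  have hNpos : 0 < N := by simp only [hN]; exact_mod_cast Fintype.card_pos
  have hkpos : (0:ℝ) < k := by exact_mod_cast hk
  set e : ℝ := Real.exp (-δ^2 * (k:ℝ) / 2) with he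
  have hepos : 0 < e := Real.exp_pos _
  set f1 : α → ℝ := fun a => ((Finset.univ.filter fun b : α => (a, b) ∈ S).card : ℝ) / N with hf1
  set g2 : (Fin k → α) → α → ℝ :=
    fun a b => ((Finset.univ.filter fun i : Fin k => (a i, b) ∈ S).card : ℝ) / k with hg2
  -- bounds
  have hf10 : ∀ a, 0 ≤ f1 a := fun a => by positivity
  have hf11 : ∀ a, f1 a ≤ 1 := by
    intro a
    rw [hf1, div_le_one hNpos, hN]
    exact_mod_cast (Finset.card_filter_le _ _).trans (by simp)
  have hg20 : ∀ a b, 0 ≤ g2 a b := fun a b => by positivity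
  have hg21 : ∀ a b, g2 a b ≤ 1 := by
    intro a b
    rw [hg2, div_le_one hkpos]
    exact_mod_cast (Finset.card_filter_le _ _).trans (by simp)
  -- mean identities
  have hsum1 : ∑ a : α, f1 a = (S.card : ℝ) / N := by
    rw [hf1, ← Finset.sum_div]
    congr 1
    have h := card_filter_prod (fun x : α × α => x ∈ S)
    rw [Finset.filter_univ_mem] at h
    exact_mod_cast h.symm
  have hm1 : (∑ a : α, f1 a) / N = (S.card : ℝ) / N^2 := by
    rw [hsum1, div_div, sq]
  have hswap : ∀ a : Fin k → α,
      ∑ b : α, ((Finset.univ.filter fun i : Fin k => (a i, b) ∈ S).card : ℝ)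
        = ∑ i : Fin k, ((Finset.univ.filter fun b : α => (a i, b) ∈ S).card : ℝ) := by
    intro a
    have h1 := card_filter_prod (fun x : Fin k × α => (a x.1, x.2) ∈ S)
    have h2 := card_filter_prod' (fun x : Fin k × α => (a x.1, x.2) ∈ S)
    rw [h1] at h2
    exact_mod_cast h2.symm
  have hm2 : ∀ a : Fin k → α, (∑ b : α, g2 a b) / N = (∑ i, f1 (a i)) / k := by
    intro a
    rw [hg2, hf1]
    simp only
    rw [← Finset.sum_div, ← Finset.sum_div, div_div, div_div, hswap a, mul_comm (k:ℝ) N]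
  have hE : ∀ a b : Fin k → α,
      (∑ j, g2 a (b j)) / k = ((Finset.univ.filter fun ij : Fin k × Fin k =>
          (a ij.1, b ij.2) ∈ S).card : ℝ) / (k:ℝ)^2 := by
    intro a b
    have h := card_filter_prod' (fun ij : Fin k × Fin k => (a ij.1, b ij.2) ∈ S)
    have h' : ((Finset.univ.filter fun ij : Fin k × Fin k => (a ij.1, b ij.2) ∈ S).card : ℝ)
        = ∑ j : Fin k, ((Finset.univ.filter fun i : Fin k => (a i, b j) ∈ S).card : ℝ) := by
      exact_mod_cast h
    rw [h', hg2]
    simp only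
    rw [← Finset.sum_div, div_div, sq]
  -- bad sets
  set Bad1 : Finset (Fin k → α) := Finset.univ.filter fun a =>
    δ/2 ≤ |(∑ i, f1 (a i))/k - (∑ x, f1 x)/N| with hBad1
  set Bad2 : (Fin k → α) → Finset (Fin k → α) := fun a => Finset.univ.filter fun b =>
    δ/2 ≤ |(∑ j, g2 a (b j))/k - (∑ x, g2 a x)/N| with hBad2
  have hexp : -2 * (δ/2)^2 * (k:ℝ) = -δ^2 * (k:ℝ) / 2 := by ring
  have hB1 : (Bad1.card : ℝ) ≤ 2 * e * N^k := by
    have := chernoff_two k hk f1 hf10 hf11 (δ/2) (by positivity)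
    rw [hexp, ← he, ← hN] at this
    exact this
  have hB2 : ∀ a, ((Bad2 a).card : ℝ) ≤ 2 * e * N^k := by
    intro a
    have := chernoff_two k hk (g2 a) (hg20 a) (hg21 a) (δ/2) (by positivity)
    rw [hexp, ← he, ← hN] at this
    exact this
  -- good pairs
  have hgood : ∀ a b : Fin k → α, a ∉ Bad1 → b ∉ Bad2 a →
      |((Finset.univ.filter fun ij : Fin k × Fin k =>
          (a ij.1, b ij.2) ∈ S).card : ℝ) / (k:ℝ)^2 - (S.card : ℝ) / N^2| < δ := by
    intro a b ha hb
    rw [hBad1, Finset.mem_filter, not_and] at ha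
    rw [hBad2, Finset.mem_filter, not_and] at hb
    have ha' : |(∑ i, f1 (a i))/k - (∑ x, f1 x)/N| < δ/2 :=
      lt_of_not_ge fun h => ha (Finset.mem_univ a) h
    have hb' : |(∑ j, g2 a (b j))/k - (∑ x, g2 a x)/N| < δ/2 :=
      lt_of_not_ge fun h => hb (Finset.mem_univ b) h
    rw [← hE a b, ← hm1]
    calc |(∑ j, g2 a (b j))/k - (∑ x, f1 x)/N|
        = |((∑ j, g2 a (b j))/k - (∑ x, g2 a x)/N) + ((∑ x, g2 a x)/N - (∑ x, f1 x)/N)| := by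
          congr 1; ring
      _ ≤ |(∑ j, g2 a (b j))/k - (∑ x, g2 a x)/N| + |(∑ x, g2 a x)/N - (∑ x, f1 x)/N| :=
          abs_add_le _ _
      _ < δ/2 + δ/2 := by
          refine add_lt_add hb' ?_
          rw [hm2 a]
          exact ha'
      _ = δ := by ring
  -- counting
  have hcount : ((Finset.univ.filter fun ab : (Fin k → α) × (Fin k → α) =>
        ¬ (|((Finset.univ.filter fun ij : Fin k × Fin k =>
            (ab.1 ij.1, ab.2 ij.2) ∈ S).card : ℝ) / (k:ℝ)^2
          - (S.card : ℝ) / N^2| < δ)).card : ℝ)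
      ≤ 4 * e * N^(2*k) := by
    have hfib := card_filter_prod (fun ab : (Fin k → α) × (Fin k → α) =>
        ¬ (|((Finset.univ.filter fun ij : Fin k × Fin k =>
            (ab.1 ij.1, ab.2 ij.2) ∈ S).card : ℝ) / (k:ℝ)^2
          - (S.card : ℝ) / N^2| < δ))
    have hcardA : ((Fintype.card (Fin k → α) : ℝ)) = N^k := by
      rw [hN]; push_cast [Fintype.card_fun]; simp
    have hfibbound : ∀ a : Fin k → α,
        ((Finset.univ.filter fun b : Fin k → α =>
          ¬ (|((Finset.univ.filter fun ij : Fin k × Fin k =>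
              (a ij.1, b ij.2) ∈ S).card : ℝ) / (k:ℝ)^2
            - (S.card : ℝ) / N^2| < δ)).card : ℝ)
        ≤ (if a ∈ Bad1 then N^k else 0) + 2 * e * N^k := by
      intro a
      by_cases ha : a ∈ Bad1
      · rw [if_pos ha]
        have h1 : ((Finset.univ.filter fun b : Fin k → α =>
            ¬ (|((Finset.univ.filter fun ij : Fin k × Fin k =>
                (a ij.1, b ij.2) ∈ S).card : ℝ) / (k:ℝ)^2
              - (S.card : ℝ) / N^2| < δ)).card : ℝ) ≤ N^k := by
          rw [← hcardA]
          exact_mod_cast (Finset.card_filter_le _ _).trans (by simp)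
        refine h1.trans ?_
        nlinarith [pow_pos hNpos k]
      · rw [if_neg ha, zero_add]
        refine le_trans ?_ (hB2 a)
        have hsub : (Finset.univ.filter fun b : Fin k → α =>
            ¬ (|((Finset.univ.filter fun ij : Fin k × Fin k =>
                (a ij.1, b ij.2) ∈ S).card : ℝ) / (k:ℝ)^2
              - (S.card : ℝ) / N^2| < δ)) ⊆ Bad2 a := by
          intro b hbmem
          rw [Finset.mem_filter] at hbmem
          by_contra hb
          exact hbmem.2 (hgood a b ha hb)
        exact_mod_cast Finset.card_le_card hsub
    calc ((Finset.univ.filter fun ab : (Fin k → α) × (Fin k → α) =>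
          ¬ (|((Finset.univ.filter fun ij : Fin k × Fin k =>
              (ab.1 ij.1, ab.2 ij.2) ∈ S).card : ℝ) / (k:ℝ)^2
            - (S.card : ℝ) / N^2| < δ)).card : ℝ)
        = ∑ a : Fin k → α, ((Finset.univ.filter fun b : Fin k → α =>
            ¬ (|((Finset.univ.filter fun ij : Fin k × Fin k =>
                (a ij.1, b ij.2) ∈ S).card : ℝ) / (k:ℝ)^2
              - (S.card : ℝ) / N^2| < δ)).card : ℝ) := by exact_mod_cast hfib
      _ ≤ ∑ a : Fin k → α, ((if a ∈ Bad1 then N^k else 0) + 2 * e * N^k) :=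
          Finset.sum_le_sum fun a _ => hfibbound a
      _ = (Bad1.card : ℝ) * N^k + (Fintype.card (Fin k → α) : ℝ) * (2 * e * N^k) := by
          rw [Finset.sum_add_distrib]
          congr 1
          · rw [Finset.sum_ite_mem, Finset.univ_inter, Finset.sum_const, nsmul_eq_mul]
          · rw [Finset.sum_const, nsmul_eq_mul, Finset.card_univ]
      _ ≤ (2 * e * N^k) * N^k + N^k * (2 * e * N^k) := by
          rw [hcardA]
          have := hB1
          nlinarith [pow_pos hNpos k]
      _ = 4 * e * N^(2*k) := by
          rw [two_mul k, pow_add]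
          ring
  exact hcount


/-- Derandomization step of Newman's theorem for private randomness. For
`S ⊆ {0,1}^s × {0,1}^s` and uniform independent samples `a₁,…,a_k`,
`b₁,…,b_k ∈ {0,1}^s`, with probability `≥ 1 − 4e^{−δ²k/2}` the empirical
frequency of `S` is within `δ` of `|S|/2^{2s}`; consequently, for a family of
tracked events indexed by `I` with `4e^{−δ²k/2}·|I| < 1` there is a single
choice of samples good for all events simultaneously. -/
theorem newman_sampling (s k : ℕ) (hk : 0 < k) (δ : ℝ) (hδ : 0 < δ) :
    (∀ S : Finset ((Fin s → Bool) × (Fin s → Bool)),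
      1 - 4 * Real.exp (-δ^2 * k / 2) ≤
        (Nat.card {ab : (Fin k → Fin s → Bool) × (Fin k → Fin s → Bool) //
            |((Finset.univ.filter fun ij : Fin k × Fin k =>
                (ab.1 ij.1, ab.2 ij.2) ∈ S).card : ℝ) / (k : ℝ)^2
              - (S.card : ℝ) / (2 : ℝ)^(2*s)| < δ} : ℝ)
          / (Fintype.card
              ((Fin k → Fin s → Bool) × (Fin k → Fin s → Bool)) : ℝ))
    ∧ ∀ (I : Type) [Fintype I],
        ∀ S : I → Finset ((Fin s → Bool) × (Fin s → Bool)),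
        4 * Real.exp (-δ^2 * k / 2) * (Fintype.card I : ℝ) < 1 →
        ∃ ab : (Fin k → Fin s → Bool) × (Fin k → Fin s → Bool),
          ∀ i : I,
            |((Finset.univ.filter fun ij : Fin k × Fin k =>
                (ab.1 ij.1, ab.2 ij.2) ∈ S i).card : ℝ) / (k : ℝ)^2
              - ((S i).card : ℝ) / (2 : ℝ)^(2*s)| < δ := by
  classical
  set e : ℝ := Real.exp (-δ^2 * (k:ℝ) / 2) with he
  have hepos : 0 < e := Real.exp_pos _
  have hNsq : ((Fintype.card (Fin s → Bool) : ℝ))^2 = (2:ℝ)^(2*s) := by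
    have : Fintype.card (Fin s → Bool) = 2^s := by simp
    rw [this]
    push_cast
    rw [← pow_mul, mul_comm]
  have hT : ((Fintype.card ((Fin k → Fin s → Bool) × (Fin k → Fin s → Bool)) : ℕ) : ℝ)
      = ((Fintype.card (Fin s → Bool) : ℝ))^(2*k) := by
    rw [Fintype.card_prod, Fintype.card_fun, Fintype.card_fin]
    push_cast
    rw [← pow_add, two_mul]
  have hTpos : (0:ℝ) <
      ((Fintype.card ((Fin k → Fin s → Bool) × (Fin k → Fin s → Bool)) : ℕ) : ℝ) := by
    exact_mod_cast Fintype.card_pos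
  -- uniform bad-count bound
  have hbad : ∀ S : Finset ((Fin s → Bool) × (Fin s → Bool)),
      ((Finset.univ.filter fun ab : (Fin k → Fin s → Bool) × (Fin k → Fin s → Bool) =>
        ¬ (|((Finset.univ.filter fun ij : Fin k × Fin k =>
            (ab.1 ij.1, ab.2 ij.2) ∈ S).card : ℝ) / (k:ℝ)^2
          - (S.card : ℝ) / (2:ℝ)^(2*s)| < δ)).card : ℝ)
      ≤ 4 * e *
        ((Fintype.card ((Fin k → Fin s → Bool) × (Fin k → Fin s → Bool)) : ℕ) : ℝ) := by
    intro S
    have h := newman_core (α := Fin s → Bool) k hk δ hδ S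
    rw [hNsq] at h
    rw [hT]
    exact h
  -- relation between Nat.card of good subtype and bad filter card
  have hgb : ∀ S : Finset ((Fin s → Bool) × (Fin s → Bool)),
      (Nat.card {ab : (Fin k → Fin s → Bool) × (Fin k → Fin s → Bool) //
            |((Finset.univ.filter fun ij : Fin k × Fin k =>
                (ab.1 ij.1, ab.2 ij.2) ∈ S).card : ℝ) / (k : ℝ)^2
              - (S.card : ℝ) / (2 : ℝ)^(2*s)| < δ})
        + (Finset.univ.filter fun ab : (Fin k → Fin s → Bool) × (Fin k → Fin s → Bool) =>
            ¬ (|((Finset.univ.filter fun ij : Fin k × Fin k =>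
                (ab.1 ij.1, ab.2 ij.2) ∈ S).card : ℝ) / (k:ℝ)^2
              - (S.card : ℝ) / (2:ℝ)^(2*s)| < δ)).card
      = Fintype.card ((Fin k → Fin s → Bool) × (Fin k → Fin s → Bool)) := by
    intro S
    rw [Nat.card_eq_fintype_card, Fintype.card_subtype]
    exact Finset.card_filter_add_card_filter_not _
  have key : ∀ S : Finset ((Fin s → Bool) × (Fin s → Bool)),
      1 - 4 * e ≤
        (Nat.card {ab : (Fin k → Fin s → Bool) × (Fin k → Fin s → Bool) //
            |((Finset.univ.filter fun ij : Fin k × Fin k =>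
                (ab.1 ij.1, ab.2 ij.2) ∈ S).card : ℝ) / (k : ℝ)^2
              - (S.card : ℝ) / (2 : ℝ)^(2*s)| < δ} : ℝ)
          / (Fintype.card
              ((Fin k → Fin s → Bool) × (Fin k → Fin s → Bool)) : ℝ) := by
    intro S
    rw [le_div_iff₀ hTpos]
    have h1 := hbad S
    have h2 := hgb S
    have h2' : (Nat.card {ab : (Fin k → Fin s → Bool) × (Fin k → Fin s → Bool) //
            |((Finset.univ.filter fun ij : Fin k × Fin k =>
                (ab.1 ij.1, ab.2 ij.2) ∈ S).card : ℝ) / (k : ℝ)^2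
              - (S.card : ℝ) / (2 : ℝ)^(2*s)| < δ} : ℝ)
        + ((Finset.univ.filter fun ab : (Fin k → Fin s → Bool) × (Fin k → Fin s → Bool) =>
            ¬ (|((Finset.univ.filter fun ij : Fin k × Fin k =>
                (ab.1 ij.1, ab.2 ij.2) ∈ S).card : ℝ) / (k:ℝ)^2
              - (S.card : ℝ) / (2:ℝ)^(2*s)| < δ)).card : ℝ)
        = ((Fintype.card ((Fin k → Fin s → Bool) × (Fin k → Fin s → Bool)) : ℕ) : ℝ) := by
      exact_mod_cast h2
    nlinarith
  refine ⟨key, ?_⟩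
  intro I _ S hI
  by_contra hcon
  push_neg at hcon
  set T := Fintype.card ((Fin k → Fin s → Bool) × (Fin k → Fin s → Bool)) with hTdef
  have hsub : (Finset.univ : Finset ((Fin k → Fin s → Bool) × (Fin k → Fin s → Bool)))
      ⊆ Finset.univ.biUnion (fun i : I =>
          Finset.univ.filter fun ab : (Fin k → Fin s → Bool) × (Fin k → Fin s → Bool) =>
            ¬ (|((Finset.univ.filter fun ij : Fin k × Fin k =>
                (ab.1 ij.1, ab.2 ij.2) ∈ S i).card : ℝ) / (k:ℝ)^2
              - ((S i).card : ℝ) / (2:ℝ)^(2*s)| < δ)) := by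
    intro ab _
    obtain ⟨i, hi⟩ := hcon ab
    rw [Finset.mem_biUnion]
    exact ⟨i, Finset.mem_univ i, Finset.mem_filter.mpr ⟨Finset.mem_univ ab, not_lt.mpr hi⟩⟩
  have hcount : (T : ℝ) ≤ (Fintype.card I : ℝ) * (4 * e * (T : ℝ)) := by
    have h1 : T ≤ ∑ i : I, (Finset.univ.filter fun ab :
          (Fin k → Fin s → Bool) × (Fin k → Fin s → Bool) =>
            ¬ (|((Finset.univ.filter fun ij : Fin k × Fin k =>
                (ab.1 ij.1, ab.2 ij.2) ∈ S i).card : ℝ) / (k:ℝ)^2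
              - ((S i).card : ℝ) / (2:ℝ)^(2*s)| < δ)).card := by
      calc T = (Finset.univ : Finset ((Fin k → Fin s → Bool) × (Fin k → Fin s → Bool))).card := by
            rw [Finset.card_univ]
        _ ≤ _ := (Finset.card_le_card hsub).trans (Finset.card_biUnion_le)
    calc (T : ℝ) ≤ ∑ i : I, ((Finset.univ.filter fun ab :
          (Fin k → Fin s → Bool) × (Fin k → Fin s → Bool) =>
            ¬ (|((Finset.univ.filter fun ij : Fin k × Fin k =>
                (ab.1 ij.1, ab.2 ij.2) ∈ S i).card : ℝ) / (k:ℝ)^2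
              - ((S i).card : ℝ) / (2:ℝ)^(2*s)| < δ)).card : ℝ) := by
          exact_mod_cast h1
      _ ≤ ∑ _i : I, 4 * e * (T : ℝ) := Finset.sum_le_sum fun i _ => hbad (S i)
      _ = (Fintype.card I : ℝ) * (4 * e * (T : ℝ)) := by
          rw [Finset.sum_const, nsmul_eq_mul, Finset.card_univ]
  have : 4 * e * (Fintype.card I : ℝ) * (T:ℝ) < 1 * (T:ℝ) :=
    mul_lt_mul_of_pos_right hI hTpos
  nlinarith
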